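/- Suppose the next-stage value Hessian is V_{xx}^{t+1} = z zᵀ for z ∈ ℝ^{n'}. Let two parallel layers have Jacobians F_x ∈ ℝ^{n'×n}, F_u ∈ ℝ^{n'×m} (parameter u) and H_{x_r} ∈ ℝ^{n'×r}, H_v ∈ ℝ^{n'×p} (parameter v), with symmetric invertible curvatures Q_uu ∈ ℝ^{m×m}, Q_vv ∈ ℝ^{p×p} and vanishing cross curvature Q_uv = 0. Set q_x = F_xᵀ z, q_u = F_uᵀ z, q_v = H_vᵀ z. Then under the Gauss–Newton expansion, the jointly minimized value Hessian block satisfies F_xᵀ V_{xx}^{t+1} F_x − (F_uᵀ V_{xx}^{t+1} F_x)ᵀ Q_uu⁻¹ (F_uᵀ V_{xx}^{t+1} F_x) − (H_vᵀ V_{xx}^{t+1} F_x)ᵀ Q_vv⁻¹ (H_vᵀ V_{xx}^{t+1} F_x) = (1 − q_uᵀ Q_uu⁻¹ q_u − q_vᵀ Q_vv⁻¹ q_v) q_x q_xᵀ; hence in the cooperative stage both players contribute their own rescaling term to the common scalar factor of the outer-product factorization. -/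

import Mathlib

open Matrix

lemma sand_vecMulVec {a b c : ℕ} (z : Fin c → ℝ)
    (A : Matrix (Fin c) (Fin a) ℝ) (B : Matrix (Fin c) (Fin b) ℝ) :
    Aᵀ * vecMulVec z z * B = vecMulVec (Aᵀ *ᵥ z) (Bᵀ *ᵥ z) := by
  ext i j
  simp only [mul_apply, vecMulVec_apply, transpose_apply, mulVec, dotProduct,
    Finset.sum_mul, Finset.mul_sum]
  apply Finset.sum_congr rfl
  intro k _
  apply Finset.sum_congr rfl
  intro l _
  ring

lemma middle_term {a c : ℕ} (qu : Fin c → ℝ) (qx : Fin a → ℝ)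
    (M : Matrix (Fin c) (Fin c) ℝ) :
    (vecMulVec qu qx)ᵀ * M * vecMulVec qu qx
      = (qu ⬝ᵥ (M *ᵥ qu)) • vecMulVec qx qx := by
  ext i j
  simp only [mul_apply, vecMulVec_apply, transpose_apply, mulVec, dotProduct,
    Matrix.smul_apply, smul_eq_mul, Finset.sum_mul, Finset.mul_sum]
  rw [Finset.sum_comm]
  apply Finset.sum_congr rfl
  intro k _
  apply Finset.sum_congr rfl
  intro l _
  ring

/-- At a cooperative stage with vanishing cross curvature, both players add
their own rescaling term to the common scalar factor of the outer-product factorization. -/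
theorem gtddp_cooperative_outer_product {n npr m p r : ℕ}
    (z : Fin npr → ℝ)
    (Fx : Matrix (Fin npr) (Fin n) ℝ) (Fu : Matrix (Fin npr) (Fin m) ℝ)
    (Hxr : Matrix (Fin npr) (Fin r) ℝ) (Hv : Matrix (Fin npr) (Fin p) ℝ)
    (Quu : Matrix (Fin m) (Fin m) ℝ) (Qvv : Matrix (Fin p) (Fin p) ℝ)
    (Quv : Matrix (Fin m) (Fin p) ℝ)
    (hQuusymm : Quu.IsSymm) (hQuuinv : IsUnit Quu.det)
    (hQvvsymm : Qvv.IsSymm) (hQvvinv : IsUnit Qvv.det)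
    (hQuv : Quv = 0) :
    let Vxx1 := vecMulVec z z
    let qx := Fxᵀ *ᵥ z
    let qu := Fuᵀ *ᵥ z
    let qv := Hvᵀ *ᵥ z
    Fxᵀ * Vxx1 * Fx
        - (Fuᵀ * Vxx1 * Fx)ᵀ * Quu⁻¹ * (Fuᵀ * Vxx1 * Fx)
        - (Hvᵀ * Vxx1 * Fx)ᵀ * Qvv⁻¹ * (Hvᵀ * Vxx1 * Fx)
      = (1 - qu ⬝ᵥ (Quu⁻¹ *ᵥ qu) - qv ⬝ᵥ (Qvv⁻¹ *ᵥ qv)) • vecMulVec qx qx := by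
  intro Vxx1 qx qu qv
  rw [show Fxᵀ * Vxx1 * Fx = vecMulVec qx qx from sand_vecMulVec z Fx Fx,
    show Fuᵀ * Vxx1 * Fx = vecMulVec qu qx from sand_vecMulVec z Fu Fx,
    show Hvᵀ * Vxx1 * Fx = vecMulVec qv qx from sand_vecMulVec z Hv Fx,
    middle_term, middle_term, sub_smul, sub_smul, one_smul]
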